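/- Suppose 0 < σ ≤ 1/2. Define g(T) = ∫_{(0,∞)^p} ψ(2Tw₁, …, 2Tw_p) ρ(dw). Then g(T) = O(T^{3σ/2}) as T → ∞: there exist a constant C < ∞ and T₀ > 0 such that g(T) ≤ C T^{3σ/2} for all T ≥ T₀. Consequently the expected number of edges E[E_{α,T}] = (α²/2) g(T) satisfies E[E_{α,T}] = O(T^{3σ/2}) as T → ∞ for any fixed α > 0. -/

import Mathlib

open MeasureTheory Real Filter

/-- The Lévy measure of a generalized gamma process: the measure on `(0,∞)` with density
`w ↦ w^(-1-σ) * exp(-τ*w) / Γ(1-σ)` with respect to Lebesgue measure. -/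
noncomputable def rho0 (σ τ : ℝ) : Measure ℝ :=
  ((volume : Measure ℝ).restrict (Set.Ioi 0)).withDensity
    (fun w => ENNReal.ofReal (w ^ (-1 - σ) * Real.exp (-τ * w) / Real.Gamma (1 - σ)))

/-- The Gamma(a,b) probability measure on `(0,∞)`, with density
`x ↦ b^a x^(a−1) e^(−b x) / Γ(a)` with respect to Lebesgue measure. -/
noncomputable def gammaM (a b : ℝ) : Measure ℝ :=
  ((volume : Measure ℝ).restrict (Set.Ioi 0)).withDensity
    (fun x => ENNReal.ofReal (b ^ a * x ^ (a - 1) * Real.exp (-b * x) / Real.Gamma a))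

/-- The multivariate Lévy measure `ρ` of the compound CRM with independent gamma scores:
the pushforward of `ρ₀ ⊗ Gamma(a₁,b₁) ⊗ ⋯ ⊗ Gamma(a_p,b_p)` under
`(w₀, β₁, …, β_p) ↦ (w₀β₁, …, w₀β_p)`. -/
noncomputable def rhoC (σ τ : ℝ) (p : ℕ) (a b : Fin p → ℝ) : Measure (Fin p → ℝ) :=
  Measure.map (fun x : ℝ × (Fin p → ℝ) => fun k => x.1 * x.2 k)
    ((rho0 σ τ).prod (Measure.pi fun k => gammaM (a k) (b k)))

/-- The Laplace exponent `ψ(t) = ∫ (1 − e^{−Σ_k t_k v_k}) ρ(dv)` of the compound CRM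
(a finite quantity, expressed here as a Bochner integral). -/
noncomputable def psi (σ τ : ℝ) (p : ℕ) (a b : Fin p → ℝ) (t : Fin p → ℝ) : ℝ :=
  ∫ v, (1 - Real.exp (-∑ k, t k * v k)) ∂(rhoC σ τ p a b)

/-- `g(T) = ∫ ψ(2Tw₁,…,2Tw_p) ρ(dw)`, so that `E[E_{α,T}] = (α²/2) g(T)`. -/
noncomputable def edgesIntegral (σ τ : ℝ) (p : ℕ) (a b : Fin p → ℝ) (T : ℝ) : ℝ :=
  ∫ w, psi σ τ p a b (fun k => 2 * T * w k) ∂(rhoC σ τ p a b)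

lemma one_sub_exp_add_le {x y : ℝ} (hx : 0 ≤ x) (hy : 0 ≤ y) :
    1 - Real.exp (-(x + y)) ≤ (1 - Real.exp (-x)) + (1 - Real.exp (-y)) := by
  have h1 : Real.exp (-x) ≤ 1 := Real.exp_le_one_iff.mpr (by linarith)
  have h2 : Real.exp (-y) ≤ 1 := Real.exp_le_one_iff.mpr (by linarith)
  rw [neg_add, Real.exp_add]
  nlinarith [mul_nonneg (sub_nonneg.2 h1) (sub_nonneg.2 h2)]

lemma one_sub_exp_sum_le {ι : Type*} (s : Finset ι) (x : ι → ℝ) (hx : ∀ i, 0 ≤ x i) :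
    1 - Real.exp (-∑ i ∈ s, x i) ≤ ∑ i ∈ s, (1 - Real.exp (-x i)) := by
  classical
  induction s using Finset.induction_on with
  | empty => simp
  | @insert c t hct ih =>
    rw [Finset.sum_insert hct, Finset.sum_insert hct]
    have h1 : 1 - Real.exp (-(x c + ∑ i ∈ t, x i)) ≤
        (1 - Real.exp (-x c)) + (1 - Real.exp (-∑ i ∈ t, x i)) :=
      one_sub_exp_add_le (hx c) (Finset.sum_nonneg fun i _ => hx i)
    linarith

lemma one_sub_exp_le_rpow {x s : ℝ} (hx : 0 ≤ x) (hs0 : 0 < s) (hs1 : s ≤ 1) :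
    1 - Real.exp (-x) ≤ x ^ s := by
  rcases le_or_gt x 1 with h | h
  · have h1 : 1 - Real.exp (-x) ≤ x := by nlinarith [Real.add_one_le_exp (-x)]
    rcases eq_or_lt_of_le hx with rfl | hx0
    · simpa [Real.zero_rpow hs0.ne'] using h1
    · have h2 := Real.rpow_le_rpow_of_exponent_ge hx0 h hs1
      rw [Real.rpow_one] at h2
      linarith
  · have h1 : 1 - Real.exp (-x) ≤ 1 := by nlinarith [Real.exp_pos (-x)]
    exact h1.trans (Real.one_le_rpow h.le hs0.le)

lemma integrableOn_rpow_mul_exp_neg_mul {c r : ℝ} (hc : 0 < c) (hr : 0 < r) :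
    IntegrableOn (fun x : ℝ => x ^ (c - 1) * Real.exp (-(r * x))) (Set.Ioi 0) := by
  have h1 : IntegrableOn (fun y : ℝ => Real.exp (-y) * y ^ (c - 1)) (Set.Ioi (r * 0)) := by
    rw [mul_zero]; exact Real.GammaIntegral_convergent hc
  have h2 := (integrableOn_Ioi_comp_mul_left_iff
    (fun y : ℝ => Real.exp (-y) * y ^ (c - 1)) 0 hr).2 h1
  have h3 := h2.const_mul ((r : ℝ) ^ (c - 1))⁻¹
  refine MeasureTheory.IntegrableOn.congr_fun h3 (fun x hx => ?_) measurableSet_Ioi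
  have hx0 : (0:ℝ) < x := hx
  rw [Real.mul_rpow hr.le hx0.le]
  have hr' : (r : ℝ) ^ (c - 1) ≠ 0 := (Real.rpow_pos_of_pos hr _).ne'
  field_simp

lemma integrable_rpow_mul_restrict (K : ℝ) {u r : ℝ} (hr : 0 < r) {c : ℝ} (hcu : 0 < c + u + 1) :
    IntegrableOn (fun x : ℝ => x ^ c * (K * (x ^ u * Real.exp (-(r * x))))) (Set.Ioi 0) := by
  have h := (integrableOn_rpow_mul_exp_neg_mul hcu hr).const_mul K
  refine MeasureTheory.IntegrableOn.congr_fun h (fun x hx => ?_) measurableSet_Ioi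
  have hx0 : (0:ℝ) < x := hx
  have hxx : x ^ (c + u + 1 - 1) = x ^ c * x ^ u := by
    rw [show c + u + 1 - 1 = c + u by ring, Real.rpow_add hx0]
  rw [hxx]; ring

lemma integrable_rpow_rho0 {σ τ : ℝ} (hσ1 : σ < 1) (hτ : 0 < τ) {c : ℝ} (hc : σ < c) :
    Integrable (fun w : ℝ => w ^ c) (rho0 σ τ) := by
  have hmeas : Measurable fun w : ℝ =>
      ENNReal.ofReal (w ^ (-1 - σ) * Real.exp (-τ * w) / Real.Gamma (1 - σ)) := by
    apply ENNReal.measurable_ofReal.comp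
    exact ((measurable_id.pow measurable_const).mul
      ((measurable_id.const_mul (-τ)).exp)).div_const _
  rw [rho0, integrable_withDensity_iff hmeas
    (Eventually.of_forall fun x => ENNReal.ofReal_lt_top)]
  have h := integrable_rpow_mul_restrict (K := 1 / Real.Gamma (1 - σ)) (u := -1 - σ)
    hτ (c := c) (by linarith)
  refine h.congr ?_
  filter_upwards [ae_restrict_mem measurableSet_Ioi] with x hx
  have hx0 : (0:ℝ) < x := hx
  have hd : 0 ≤ x ^ (-1 - σ) * Real.exp (-τ * x) / Real.Gamma (1 - σ) :=
    div_nonneg (mul_nonneg (Real.rpow_pos_of_pos hx0 _).le (Real.exp_pos _).le)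
      (Real.Gamma_pos_of_pos (by linarith)).le
  rw [ENNReal.toReal_ofReal hd, neg_mul]
  ring

lemma integrable_rpow_gammaM {a b : ℝ} (ha : 0 < a) (hb : 0 < b) {c : ℝ} (hc : 0 ≤ c) :
    Integrable (fun x : ℝ => x ^ c) (gammaM a b) := by
  have hmeas : Measurable fun x : ℝ =>
      ENNReal.ofReal (b ^ a * x ^ (a - 1) * Real.exp (-b * x) / Real.Gamma a) := by
    apply ENNReal.measurable_ofReal.comp
    exact (((measurable_const.mul (measurable_id.pow measurable_const))).mul
      ((measurable_id.const_mul (-b)).exp)).div_const _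
  rw [gammaM, integrable_withDensity_iff hmeas
    (Eventually.of_forall fun x => ENNReal.ofReal_lt_top)]
  have h := integrable_rpow_mul_restrict (K := b ^ a / Real.Gamma a) (u := a - 1)
    hb (c := c) (by linarith)
  refine h.congr ?_
  filter_upwards [ae_restrict_mem measurableSet_Ioi] with x hx
  have hx0 : (0:ℝ) < x := hx
  have hd : 0 ≤ b ^ a * x ^ (a - 1) * Real.exp (-b * x) / Real.Gamma a :=
    div_nonneg (mul_nonneg (mul_nonneg (Real.rpow_pos_of_pos hb _).le
      (Real.rpow_pos_of_pos hx0 _).le) (Real.exp_pos _).le) (Real.Gamma_pos_of_pos ha).le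
  rw [ENNReal.toReal_ofReal hd, neg_mul]
  ring

lemma isProbabilityMeasure_gammaM {a b : ℝ} (ha : 0 < a) (hb : 0 < b) :
    IsProbabilityMeasure (gammaM a b) := by
  constructor
  rw [gammaM, withDensity_apply _ MeasurableSet.univ, Measure.restrict_univ]
  have hint : IntegrableOn
      (fun x : ℝ => b ^ a * x ^ (a - 1) * Real.exp (-b * x) / Real.Gamma a) (Set.Ioi 0) := by
    have h := integrable_rpow_mul_restrict (K := b ^ a / Real.Gamma a) (u := a - 1)
      hb (c := 0) (by linarith)
    refine h.congr ?_
    filter_upwards [ae_restrict_mem measurableSet_Ioi] with x hx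
    rw [Real.rpow_zero, neg_mul]; ring
  have hnn : 0 ≤ᵐ[(volume : Measure ℝ).restrict (Set.Ioi 0)]
      fun x : ℝ => b ^ a * x ^ (a - 1) * Real.exp (-b * x) / Real.Gamma a := by
    filter_upwards [ae_restrict_mem measurableSet_Ioi] with x hx
    have hx0 : (0:ℝ) < x := hx
    exact div_nonneg (mul_nonneg (mul_nonneg (Real.rpow_pos_of_pos hb _).le
      (Real.rpow_pos_of_pos hx0 _).le) (Real.exp_pos _).le) (Real.Gamma_pos_of_pos ha).le
  rw [← ofReal_integral_eq_lintegral_ofReal hint hnn]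
  have heq : ∫ x in Set.Ioi (0:ℝ), b ^ a * x ^ (a - 1) * Real.exp (-b * x) / Real.Gamma a
      = (b ^ a / Real.Gamma a) * ∫ x in Set.Ioi (0:ℝ), x ^ (a - 1) * Real.exp (-(b * x)) := by
    rw [← integral_const_mul]
    apply setIntegral_congr_fun measurableSet_Ioi
    intro x hx
    dsimp only
    rw [neg_mul]; ring
  rw [heq, Real.integral_rpow_mul_exp_neg_mul_Ioi ha hb]
  have hb' : (0:ℝ) < b ^ a := Real.rpow_pos_of_pos hb a
  have hΓ : (0:ℝ) < Real.Gamma a := Real.Gamma_pos_of_pos ha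
  rw [one_div, Real.inv_rpow hb.le]
  rw [show b ^ a / Real.Gamma a * ((b ^ a)⁻¹ * Real.Gamma a) = 1 by field_simp]
  exact ENNReal.ofReal_one

lemma ae_pos_gammaM (a b : ℝ) : ∀ᵐ x ∂(gammaM a b), 0 < x := by
  rw [gammaM]
  exact (ae_restrict_mem measurableSet_Ioi).filter_mono
    (withDensity_absolutelyContinuous _ _).ae_le

lemma ae_pos_rho0 (σ τ : ℝ) : ∀ᵐ x ∂(rho0 σ τ), 0 < x := by
  rw [rho0]
  exact (ae_restrict_mem measurableSet_Ioi).filter_mono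
    (withDensity_absolutelyContinuous _ _).ae_le

lemma pi_map_eval {p : ℕ} (μ : Fin p → Measure ℝ) [∀ k, IsProbabilityMeasure (μ k)] (k : Fin p) :
    (Measure.pi μ).map (Function.eval k) = μ k := by
  ext s hs
  rw [Measure.map_apply (measurable_pi_apply k) hs, Set.eval_preimage, Measure.pi_pi]
  rw [Finset.prod_eq_single k (fun j _ hj => by
      rw [Function.update_of_ne hj]; exact measure_univ)
    (fun h => absurd (Finset.mem_univ k) h)]
  rw [Function.update_self]

lemma integrable_eval_pi {p : ℕ} {μ : Fin p → Measure ℝ} [∀ k, IsProbabilityMeasure (μ k)]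
    {k : Fin p} {f : ℝ → ℝ} (hif : Integrable f (μ k)) :
    Integrable (fun x : Fin p → ℝ => f (x k)) (Measure.pi μ) := by
  have h : Integrable f ((Measure.pi μ).map (Function.eval k)) := by
    rw [pi_map_eval]; exact hif
  have hmeas : AEStronglyMeasurable f ((Measure.pi μ).map (Function.eval k)) := by
    rw [pi_map_eval]; exact hif.1
  rw [integrable_map_measure hmeas (measurable_pi_apply k).aemeasurable] at h
  exact h

lemma phi_measurable {p : ℕ} :
    Measurable (fun x : ℝ × (Fin p → ℝ) => fun k => x.1 * x.2 k) :=
  measurable_pi_lambda _ fun k =>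
    measurable_fst.mul ((measurable_pi_apply k).comp measurable_snd)

lemma ae_pos_prod (σ τ : ℝ) {p : ℕ} (a b : Fin p → ℝ) (ha : ∀ k, 0 < a k) (hb : ∀ k, 0 < b k) :
    ∀ᵐ x ∂((rho0 σ τ).prod (Measure.pi fun k => gammaM (a k) (b k))),
      0 < x.1 ∧ ∀ k, 0 < x.2 k := by
  haveI : ∀ k, IsProbabilityMeasure (gammaM (a k) (b k)) :=
    fun k => isProbabilityMeasure_gammaM (ha k) (hb k)
  have h2 : ∀ᵐ y ∂(Measure.pi fun k => gammaM (a k) (b k)), ∀ k, 0 < y k := by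
    rw [eventually_all]
    exact fun k => Measure.tendsto_eval_ae_ae.eventually (ae_pos_gammaM (a k) (b k))
  have hp : MeasurableSet {x : ℝ × (Fin p → ℝ) | 0 < x.1 ∧ ∀ k, 0 < x.2 k} := by
    have hset : {x : ℝ × (Fin p → ℝ) | 0 < x.1 ∧ ∀ k, 0 < x.2 k}
        = (Prod.fst ⁻¹' Set.Ioi 0) ∩ ⋂ k, ((fun x : ℝ × (Fin p → ℝ) => x.2 k) ⁻¹' Set.Ioi 0) := by
      ext x; simp [Set.mem_iInter]
    rw [hset]
    exact (measurable_fst measurableSet_Ioi).inter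
      (MeasurableSet.iInter fun k =>
        ((measurable_pi_apply k).comp measurable_snd) measurableSet_Ioi)
  rw [Measure.ae_prod_iff_ae_ae hp]
  filter_upwards [ae_pos_rho0 σ τ] with w hw
  filter_upwards [h2] with β hβ
  exact ⟨hw, hβ⟩

lemma ae_pos_rhoC (σ τ : ℝ) {p : ℕ} (a b : Fin p → ℝ) (ha : ∀ k, 0 < a k) (hb : ∀ k, 0 < b k) :
    ∀ᵐ v ∂(rhoC σ τ p a b), ∀ k, 0 < v k := by
  haveI : ∀ k, IsProbabilityMeasure (gammaM (a k) (b k)) :=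
    fun k => isProbabilityMeasure_gammaM (ha k) (hb k)
  have hset : MeasurableSet {v : Fin p → ℝ | ∀ k, 0 < v k} := by
    have h : {v : Fin p → ℝ | ∀ k, 0 < v k} = ⋂ k, ((fun v : Fin p → ℝ => v k) ⁻¹' Set.Ioi 0) := by
      ext v; simp [Set.mem_iInter]
    rw [h]
    exact MeasurableSet.iInter fun k => (measurable_pi_apply k) measurableSet_Ioi
  rw [rhoC, ae_map_iff phi_measurable.aemeasurable hset]
  filter_upwards [ae_pos_prod σ τ a b ha hb] with x hx k
  exact mul_pos hx.1 (hx.2 k)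

lemma integrable_coord_rpow {σ τ : ℝ} (hσ1 : σ < 1) (hτ : 0 < τ) {p : ℕ} {a b : Fin p → ℝ}
    (ha : ∀ k, 0 < a k) (hb : ∀ k, 0 < b k) {c : ℝ} (hσc : σ < c) (hc0 : 0 ≤ c) (k : Fin p) :
    Integrable (fun v : Fin p → ℝ => (v k) ^ c) (rhoC σ τ p a b) := by
  haveI : ∀ j, IsProbabilityMeasure (gammaM (a j) (b j)) :=
    fun j => isProbabilityMeasure_gammaM (ha j) (hb j)
  have hg : Measurable (fun v : Fin p → ℝ => (v k) ^ c) :=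
    (measurable_pi_apply k).pow measurable_const
  rw [rhoC, integrable_map_measure hg.aestronglyMeasurable phi_measurable.aemeasurable]
  have h1 : Integrable (fun x : ℝ × (Fin p → ℝ) => x.1 ^ c * (x.2 k) ^ c)
      ((rho0 σ τ).prod (Measure.pi fun j => gammaM (a j) (b j))) :=
    Integrable.mul_prod (integrable_rpow_rho0 hσ1 hτ hσc)
      (integrable_eval_pi (k := k) (f := fun x : ℝ => x ^ c) (integrable_rpow_gammaM (ha k) (hb k) hc0))
  refine h1.congr ?_
  filter_upwards [ae_pos_prod σ τ a b ha hb] with x hx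
  exact (Real.mul_rpow hx.1.le (hx.2 k).le).symm

/-- For `0 < σ ≤ 1/2`, `g(T) = ∫ ψ(2Tw) ρ(dw) = O(T^{3σ/2})` as `T → ∞`; consequently
`E[E_{α,T}] = (α²/2) g(T) = O(T^{3σ/2})` as `T → ∞` for any fixed `α > 0`. -/
theorem edges_growth_sigma_le_half (σ τ : ℝ) (hσ0 : 0 < σ) (hσ : σ ≤ 1 / 2) (hτ : 0 < τ)
    (p : ℕ) (hp : 1 ≤ p) (a b : Fin p → ℝ) (ha : ∀ k, 0 < a k) (hb : ∀ k, 0 < b k) :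
    (∃ C T₀ : ℝ, 0 < T₀ ∧ ∀ T ≥ T₀,
      edgesIntegral σ τ p a b T ≤ C * T ^ (3 * σ / 2)) ∧
    ∀ α : ℝ, 0 < α → ∃ C' T₁ : ℝ, 0 < T₁ ∧ ∀ T ≥ T₁,
      α ^ 2 / 2 * edgesIntegral σ τ p a b T ≤ C' * T ^ (3 * σ / 2) := by
  have hσ1 : σ < 1 := by linarith
  have hs0 : (0:ℝ) < 3 * σ / 2 := by linarith
  have hs1 : 3 * σ / 2 ≤ 1 := by linarith
  have hσc : σ < 3 * σ / 2 := by linarith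
  have hc0 : (0:ℝ) ≤ 3 * σ / 2 := by linarith
  haveI : ∀ k, IsProbabilityMeasure (gammaM (a k) (b k)) :=
    fun k => isProbabilityMeasure_gammaM (ha k) (hb k)
  set ρ := rhoC σ τ p a b with hρ
  set M : Fin p → ℝ := fun k => ∫ v, (v k) ^ (3 * σ / 2) ∂ρ with hM
  have hIntk : ∀ k, Integrable (fun v : Fin p → ℝ => (v k) ^ (3 * σ / 2)) ρ :=
    fun k => integrable_coord_rpow hσ1 hτ ha hb hσc hc0 k
  have hae : ∀ᵐ v ∂ρ, ∀ k, 0 < v k := ae_pos_rhoC σ τ a b ha hb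
  have hpsi_nonneg : ∀ t : Fin p → ℝ, (∀ k, 0 ≤ t k) → 0 ≤ psi σ τ p a b t := by
    intro t ht
    have hd : psi σ τ p a b t = ∫ v, (1 - Real.exp (-∑ k, t k * v k)) ∂ρ := rfl
    rw [hd]
    apply integral_nonneg_of_ae
    filter_upwards [hae] with v hv
    have hsum : 0 ≤ ∑ k, t k * v k :=
      Finset.sum_nonneg fun k _ => mul_nonneg (ht k) (hv k).le
    have hx := Real.exp_le_one_iff.mpr (neg_nonpos.mpr hsum)
    simp only [Pi.zero_apply]
    linarith
  have hpsi_le : ∀ t : Fin p → ℝ, (∀ k, 0 ≤ t k) →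
      psi σ τ p a b t ≤ ∑ k, t k ^ (3 * σ / 2) * M k := by
    intro t ht
    have hg : Integrable
        (fun v : Fin p → ℝ => ∑ k, t k ^ (3 * σ / 2) * (v k) ^ (3 * σ / 2)) ρ :=
      integrable_finset_sum _ fun k _ => (hIntk k).const_mul _
    have h0 : (0:ℝ→ℝ) ≤ 0 := le_refl _
    have hnn : (0:(Fin p → ℝ) → ℝ) ≤ᵐ[ρ] fun v => 1 - Real.exp (-∑ k, t k * v k) := by
      filter_upwards [hae] with v hv
      have hsum : 0 ≤ ∑ k, t k * v k :=
        Finset.sum_nonneg fun k _ => mul_nonneg (ht k) (hv k).le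
      have hx := Real.exp_le_one_iff.mpr (neg_nonpos.mpr hsum)
      simp only [Pi.zero_apply]
      linarith
    have hb2 : (fun v : Fin p → ℝ => 1 - Real.exp (-∑ k, t k * v k)) ≤ᵐ[ρ]
        fun v => ∑ k, t k ^ (3 * σ / 2) * (v k) ^ (3 * σ / 2) := by
      filter_upwards [hae] with v hv
      calc 1 - Real.exp (-∑ k, t k * v k)
          ≤ ∑ k, (1 - Real.exp (-(t k * v k))) :=
            one_sub_exp_sum_le Finset.univ _ fun k => mul_nonneg (ht k) (hv k).le
        _ ≤ ∑ k, t k ^ (3 * σ / 2) * (v k) ^ (3 * σ / 2) := by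
            refine Finset.sum_le_sum fun k _ => ?_
            have h1 := one_sub_exp_le_rpow (mul_nonneg (ht k) (hv k).le) hs0 hs1
            rwa [Real.mul_rpow (ht k) (hv k).le] at h1
    have hd : psi σ τ p a b t = ∫ v, (1 - Real.exp (-∑ k, t k * v k)) ∂ρ := rfl
    rw [hd]
    refine (integral_mono_of_nonneg hnn hg hb2).trans (le_of_eq ?_)
    rw [integral_finset_sum _ fun k _ => (hIntk k).const_mul _]
    exact Finset.sum_congr rfl fun k _ => integral_const_mul _ _
  have main : ∀ T : ℝ, 1 ≤ T →
      edgesIntegral σ τ p a b T ≤ (2 ^ (3 * σ / 2) * ∑ k, M k ^ 2) * T ^ (3 * σ / 2) := by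
    intro T hT
    have hT0 : (0:ℝ) < T := lt_of_lt_of_le one_pos hT
    have h2T : (0:ℝ) ≤ 2 * T := by linarith
    have hout : edgesIntegral σ τ p a b T
        = ∫ w, psi σ τ p a b (fun k => 2 * T * w k) ∂ρ := rfl
    have hgout : Integrable (fun w : Fin p → ℝ =>
        ∑ k, ((2 * T) ^ (3 * σ / 2) * M k) * (w k) ^ (3 * σ / 2)) ρ :=
      integrable_finset_sum _ fun k _ => (hIntk k).const_mul _
    have h0' : (0:(Fin p → ℝ) → ℝ) ≤ᵐ[ρ]
        fun w => psi σ τ p a b (fun k => 2 * T * w k) := by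
      filter_upwards [hae] with w hw
      simp only [Pi.zero_apply]
      exact hpsi_nonneg _ fun k => mul_nonneg h2T (hw k).le
    have hb3 : (fun w : Fin p → ℝ => psi σ τ p a b (fun k => 2 * T * w k)) ≤ᵐ[ρ]
        fun w => ∑ k, ((2 * T) ^ (3 * σ / 2) * M k) * (w k) ^ (3 * σ / 2) := by
      filter_upwards [hae] with w hw
      have h1 := hpsi_le (fun k => 2 * T * w k) fun k => mul_nonneg h2T (hw k).le
      refine h1.trans (le_of_eq (Finset.sum_congr rfl fun k _ => ?_))
      rw [Real.mul_rpow h2T (hw k).le]; ring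
    have key : edgesIntegral σ τ p a b T
        ≤ ∑ k, ((2 * T) ^ (3 * σ / 2) * M k) * M k := by
      rw [hout]
      refine (integral_mono_of_nonneg h0' hgout hb3).trans (le_of_eq ?_)
      rw [integral_finset_sum _ fun k _ => (hIntk k).const_mul _]
      exact Finset.sum_congr rfl fun k _ => integral_const_mul _ _
    refine key.trans (le_of_eq ?_)
    have h2Ts : (2 * T : ℝ) ^ (3 * σ / 2) = 2 ^ (3 * σ / 2) * T ^ (3 * σ / 2) :=
      Real.mul_rpow (by norm_num) hT0.le
    calc ∑ k, ((2 * T) ^ (3 * σ / 2) * M k) * M k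
        = ∑ k, (2 ^ (3 * σ / 2) * M k ^ 2) * T ^ (3 * σ / 2) :=
          Finset.sum_congr rfl fun k _ => by rw [h2Ts]; ring
      _ = (2 ^ (3 * σ / 2) * ∑ k, M k ^ 2) * T ^ (3 * σ / 2) := by
          rw [← Finset.sum_mul, ← Finset.mul_sum]
  refine ⟨⟨2 ^ (3 * σ / 2) * ∑ k, M k ^ 2, 1, one_pos, fun T hT => main T hT⟩, ?_⟩
  intro α hα
  refine ⟨α ^ 2 / 2 * (2 ^ (3 * σ / 2) * ∑ k, M k ^ 2), 1, one_pos, fun T hT => ?_⟩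
  have h := mul_le_mul_of_nonneg_left (main T hT) (by positivity : (0:ℝ) ≤ α ^ 2 / 2)
  calc α ^ 2 / 2 * edgesIntegral σ τ p a b T
      ≤ α ^ 2 / 2 * ((2 ^ (3 * σ / 2) * ∑ k, M k ^ 2) * T ^ (3 * σ / 2)) := h
    _ = α ^ 2 / 2 * (2 ^ (3 * σ / 2) * ∑ k, M k ^ 2) * T ^ (3 * σ / 2) := by ring
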